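/- Let D_4 = ⟨s, d : d⁴ = s² = e, ds = sd⁻¹⟩ act on ℝ² by s·(x,y) = (y,x) and d·(x,y) = (−y,x). Then there is no D_4-invariant subset S of ℝ² of size 28 = dim ℝ[x,y]_{≤6} that is unisolvent for the polynomials of degree at most 6. -/

import Mathlib

open MvPolynomial

def φ2 (p : Fin 2 → ℝ) : ℝ × ℝ := ((p 0)^2 + (p 1)^2, (p 0)^2 * (p 1)^2)
def ψ2 (p : Fin 2 → ℝ) : ℝ × ℝ := ((p 0)^2, (p 1)^2)
def σ2 (z : ℝ × ℝ) : ℝ × ℝ := (z.1 + z.2, z.1 * z.2)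


open MvPolynomial

lemma aux_fiber {α β : Type*} [DecidableEq α] [DecidableEq β] (T : Finset α) (f : α → β) (k : ℕ)
    (h : ∀ a ∈ T, k ≤ (T.filter (fun x => f x = f a)).card) :
    k * (T.image f).card ≤ T.card := by
  have hc : T.card = ∑ b ∈ T.image f, (T.filter (fun x => f x = b)).card :=
    Finset.card_eq_sum_card_fiberwise (fun x hx => Finset.mem_image_of_mem f hx)
  rw [hc, Finset.card_eq_sum_ones (T.image f), Finset.mul_sum]
  refine Finset.sum_le_sum ?_
  intro b hb
  obtain ⟨a, ha, rfl⟩ := Finset.mem_image.mp hb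
  simpa using h a ha

lemma aux_kernel {n : ℕ} (F : Finset (ℝ × ℝ)) (w : ℝ × ℝ → Fin n → ℝ)
    (hF : F.card < n) :
    ∃ c : Fin n → ℝ, c ≠ 0 ∧ ∀ z ∈ F, ∑ i, c i * w z i = 0 := by
  let L : (Fin n → ℝ) →ₗ[ℝ] ({ z : ℝ × ℝ // z ∈ F } → ℝ) :=
    { toFun := fun c z => ∑ i, c i * w z.1 i
      map_add' := by
        intro c c'
        funext z
        simp [add_mul, Finset.sum_add_distrib]
      map_smul' := by
        intro r c
        funext z
        simp [Finset.mul_sum, mul_assoc] }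
  have hni : ¬ Function.Injective L := by
    intro hinj
    have := LinearMap.finrank_le_finrank_of_injective hinj
    rw [Module.finrank_fin_fun, Module.finrank_fintype_fun_eq_card, Fintype.card_coe] at this
    omega
  rw [Function.not_injective_iff] at hni
  obtain ⟨c, c', hcc, hne⟩ := hni
  refine ⟨c - c', sub_ne_zero_of_ne hne, ?_⟩
  intro z hz
  have : L (c - c') = 0 := by rw [map_sub, hcc, sub_self]
  have h2 := congrFun this ⟨z, hz⟩
  simpa [L, sub_mul, Finset.sum_sub_distrib] using h2


lemma aux_orbit (S : Finset (Fin 2 → ℝ))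
    (hs : ∀ p ∈ S, (![p 1, p 0] : Fin 2 → ℝ) ∈ S)
    (hd : ∀ p ∈ S, (![-(p 1), p 0] : Fin 2 → ℝ) ∈ S) :
    ∀ p ∈ S, (![-(p 0), -(p 1)] : Fin 2 → ℝ) ∈ S ∧ (![p 1, p 0] : Fin 2 → ℝ) ∈ S ∧
      (![-(p 0), p 1] : Fin 2 → ℝ) ∈ S ∧ (![p 0, -(p 1)] : Fin 2 → ℝ) ∈ S ∧
      (![-(p 1), -(p 0)] : Fin 2 → ℝ) ∈ S := by
  intro p hp
  have h1 := hs p hp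
  have h2 := hd p hp
  have h3 := hd _ h2   -- ![-(p 0), -(p 1)]
  have h4 := hd _ h1   -- ![-(p 0), p 1]
  have h5 := hd _ h3   -- ![p 1, -(p 0)]
  have h6 := hd _ h4   -- ![-(p 1), -(p 0)]
  have h7 := hd _ h6   -- ![p 0, -(p 1)]
  simp only [Matrix.cons_val_one, Matrix.head_cons, Matrix.cons_val_zero, neg_neg] at h3 h4 h5 h6 h7
  exact ⟨h3, h1, h4, h7, h6⟩


lemma vne {x y : Fin 2 → ℝ} (h : x 0 ≠ y 0 ∨ x 1 ≠ y 1) : x ≠ y :=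
  fun he => h.elim (fun h0 => h0 (by rw [he])) (fun h1 => h1 (by rw [he]))

lemma card_four {α : Type*} [DecidableEq α] {a b c d : α} (hab : a ≠ b) (hac : a ≠ c)
    (had : a ≠ d) (hbc : b ≠ c) (hbd : b ≠ d) (hcd : c ≠ d) :
    ({a, b, c, d} : Finset α).card = 4 := by
  rw [Finset.card_insert_of_notMem (by simp [hab, hac, had]),
    Finset.card_insert_of_notMem (by simp [hbc, hbd]),
    Finset.card_insert_of_notMem (by simp [hcd]), Finset.card_singleton]

lemma aux_signs [DecidableEq (Fin 2 → ℝ)] (T : Finset (Fin 2 → ℝ)) (g : (Fin 2 → ℝ) → ℝ × ℝ)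
    (hmem : ∀ p ∈ T, (![-(p 0), p 1] : Fin 2 → ℝ) ∈ T ∧ (![p 0, -(p 1)] : Fin 2 → ℝ) ∈ T ∧
      (![-(p 0), -(p 1)] : Fin 2 → ℝ) ∈ T)
    (hnz : ∀ p ∈ T, p 0 ≠ 0 ∧ p 1 ≠ 0)
    (hg : ∀ p q : Fin 2 → ℝ, (p 0)^2 = (q 0)^2 → (p 1)^2 = (q 1)^2 → g p = g q) :
    ∀ p ∈ T, 4 ≤ (T.filter (fun x => g x = g p)).card := by
  intro p hp
  obtain ⟨h0, h1⟩ := hnz p hp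
  obtain ⟨m1, m2, m3⟩ := hmem p hp
  have hsub : ({p, ![-(p 0), p 1], ![p 0, -(p 1)], ![-(p 0), -(p 1)]} : Finset (Fin 2 → ℝ))
      ⊆ T.filter (fun x => g x = g p) := by
    intro x hx
    simp only [Finset.mem_insert, Finset.mem_singleton] at hx
    rcases hx with rfl | rfl | rfl | rfl
    · exact Finset.mem_filter.mpr ⟨hp, rfl⟩
    · exact Finset.mem_filter.mpr ⟨m1, hg _ _ (by simp [neg_sq]) (by simp)⟩
    · exact Finset.mem_filter.mpr ⟨m2, hg _ _ (by simp) (by simp [neg_sq])⟩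
    · exact Finset.mem_filter.mpr ⟨m3, hg _ _ (by simp [neg_sq]) (by simp [neg_sq])⟩
  have hc : ({p, ![-(p 0), p 1], ![p 0, -(p 1)], ![-(p 0), -(p 1)]} : Finset (Fin 2 → ℝ)).card = 4 := by
    apply card_four
    · exact vne (Or.inl (by simp only [Matrix.cons_val_zero]; exact fun h => h0 (by linarith)))
    · exact vne (Or.inr (by simp only [Matrix.cons_val_one, Matrix.head_cons, Matrix.cons_val_zero]; exact fun h => h1 (by linarith)))
    · exact vne (Or.inl (by simp only [Matrix.cons_val_zero]; exact fun h => h0 (by linarith)))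
    · exact vne (Or.inl (by simp only [Matrix.cons_val_zero]; exact fun h => h0 (by linarith)))
    · exact vne (Or.inr (by simp only [Matrix.cons_val_one, Matrix.head_cons, Matrix.cons_val_zero]; exact fun h => h1 (by linarith)))
    · exact vne (Or.inl (by simp only [Matrix.cons_val_zero]; exact fun h => h0 (by linarith)))
  calc 4 = _ := hc.symm
  _ ≤ _ := Finset.card_le_card hsub


lemma vne' {x y : Fin 2 → ℝ} (h : x 0 ≠ y 0 ∨ x 1 ≠ y 1) : x ≠ y :=
  fun he => h.elim (fun h0 => h0 (by rw [he])) (fun h1 => h1 (by rw [he]))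

lemma card_four' {α : Type*} [DecidableEq α] {a b c d : α} (hab : a ≠ b) (hac : a ≠ c)
    (had : a ≠ d) (hbc : b ≠ c) (hbd : b ≠ d) (hcd : c ≠ d) :
    ({a, b, c, d} : Finset α).card = 4 := by
  rw [Finset.card_insert_of_notMem (by simp [hab, hac, had]),
    Finset.card_insert_of_notMem (by simp [hbc, hbd]),
    Finset.card_insert_of_notMem (by simp [hcd]), Finset.card_singleton]

lemma aux_axis [DecidableEq (Fin 2 → ℝ)] (T : Finset (Fin 2 → ℝ)) (g : (Fin 2 → ℝ) → ℝ × ℝ)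
    (hmem : ∀ p ∈ T, (![-(p 0), -(p 1)] : Fin 2 → ℝ) ∈ T ∧ (![p 1, p 0] : Fin 2 → ℝ) ∈ T ∧
      (![-(p 1), -(p 0)] : Fin 2 → ℝ) ∈ T)
    (haxis : ∀ p ∈ T, (p 0 = 0 ∧ p 1 ≠ 0) ∨ (p 1 = 0 ∧ p 0 ≠ 0))
    (hg : ∀ p q : Fin 2 → ℝ, ((p 0)^2 = (q 0)^2 ∧ (p 1)^2 = (q 1)^2) ∨
      ((p 0)^2 = (q 1)^2 ∧ (p 1)^2 = (q 0)^2) → g p = g q) :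
    ∀ p ∈ T, 4 ≤ (T.filter (fun x => g x = g p)).card := by
  intro p hp
  obtain ⟨m1, m2, m3⟩ := hmem p hp
  have hsub : ({p, ![-(p 0), -(p 1)], ![p 1, p 0], ![-(p 1), -(p 0)]} : Finset (Fin 2 → ℝ))
      ⊆ T.filter (fun x => g x = g p) := by
    intro x hx
    simp only [Finset.mem_insert, Finset.mem_singleton] at hx
    rcases hx with rfl | rfl | rfl | rfl
    · exact Finset.mem_filter.mpr ⟨hp, rfl⟩
    · exact Finset.mem_filter.mpr ⟨m1, hg _ _ (Or.inl (by constructor <;> simp [neg_sq]))⟩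
    · exact Finset.mem_filter.mpr ⟨m2, hg _ _ (Or.inr (by constructor <;> simp))⟩
    · exact Finset.mem_filter.mpr ⟨m3, hg _ _ (Or.inr (by constructor <;> simp [neg_sq]))⟩
  have hc : ({p, ![-(p 0), -(p 1)], ![p 1, p 0], ![-(p 1), -(p 0)]} :
      Finset (Fin 2 → ℝ)).card = 4 := by
    rcases haxis p hp with ⟨hz, hn⟩ | ⟨hz, hn⟩
    · apply card_four'
      · exact vne' (Or.inr (by simp only [Matrix.cons_val_one, Matrix.head_cons, Matrix.cons_val_zero]; intro h; apply hn; linarith))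
      · exact vne' (Or.inl (by simp only [Matrix.cons_val_zero]; intro h; apply hn; linarith))
      · exact vne' (Or.inl (by simp only [Matrix.cons_val_zero]; intro h; apply hn; linarith))
      · exact vne' (Or.inl (by simp only [Matrix.cons_val_zero]; intro h; apply hn; linarith))
      · exact vne' (Or.inl (by simp only [Matrix.cons_val_zero]; intro h; apply hn; linarith))
      · exact vne' (Or.inl (by simp only [Matrix.cons_val_zero]; intro h; apply hn; linarith))
    · apply card_four'
      · exact vne' (Or.inl (by simp only [Matrix.cons_val_zero]; intro h; apply hn; linarith))
      · exact vne' (Or.inl (by simp only [Matrix.cons_val_zero]; intro h; apply hn; linarith))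
      · exact vne' (Or.inr (by simp only [Matrix.cons_val_one, Matrix.head_cons, Matrix.cons_val_zero]; intro h; apply hn; linarith))
      · exact vne' (Or.inr (by simp only [Matrix.cons_val_one, Matrix.head_cons, Matrix.cons_val_zero]; intro h; apply hn; linarith))
      · exact vne' (Or.inr (by simp only [Matrix.cons_val_one, Matrix.head_cons, Matrix.cons_val_zero]; intro h; apply hn; linarith))
      · exact vne' (Or.inr (by simp only [Matrix.cons_val_one, Matrix.head_cons, Matrix.cons_val_zero]; intro h; apply hn; linarith))
  calc 4 = _ := hc.symm
  _ ≤ _ := Finset.card_le_card hsub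


lemma aux_swap [DecidableEq (ℝ × ℝ)] (T : Finset (ℝ × ℝ))
    (hsw : ∀ z ∈ T, (z.2, z.1) ∈ T) (hne : ∀ z ∈ T, z.1 ≠ z.2) :
    ∀ z ∈ T, 2 ≤ (T.filter (fun w => (w.1 + w.2, w.1 * w.2) = (z.1 + z.2, z.1 * z.2))).card := by
  intro z hz
  have hsub : ({z, (z.2, z.1)} : Finset (ℝ × ℝ))
      ⊆ T.filter (fun w => (w.1 + w.2, w.1 * w.2) = (z.1 + z.2, z.1 * z.2)) := by
    intro x hx
    simp only [Finset.mem_insert, Finset.mem_singleton] at hx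
    rcases hx with rfl | rfl
    · exact Finset.mem_filter.mpr ⟨hz, rfl⟩
    · exact Finset.mem_filter.mpr ⟨hsw z hz, by simp [Prod.ext_iff]; constructor <;> ring⟩
  have hc : ({z, (z.2, z.1)} : Finset (ℝ × ℝ)).card = 2 := by
    rw [Finset.card_insert_of_notMem (by simp [Prod.ext_iff]; intro h _; exact hne z hz h),
      Finset.card_singleton]
  calc 2 = _ := hc.symm
  _ ≤ _ := Finset.card_le_card hsub

set_option maxHeartbeats 2000000 in
/-- For the `D₄` action on `ℝ²` generated by `s·(x,y) = (y,x)` and `d·(x,y) = (−y,x)`,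
there is no `D₄`-invariant set of `28 = dim ℝ[x,y]_{≤6}` points that is unisolvent for
the polynomials of degree at most `6`. -/
theorem stmt_13 :
    ¬ ∃ S : Finset (Fin 2 → ℝ), S.card = 28 ∧
      -- invariance under the reflection `s`
      (∀ p ∈ S, (![p 1, p 0] : Fin 2 → ℝ) ∈ S) ∧
      -- invariance under the rotation `d`
      (∀ p ∈ S, (![-(p 1), p 0] : Fin 2 → ℝ) ∈ S) ∧
      -- unisolvence for `ℝ[x,y]_{≤6}`
      (∀ q : MvPolynomial (Fin 2) ℝ, q.totalDegree ≤ 6 →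
        (∀ p ∈ S, MvPolynomial.eval p q = 0) → q = 0) := by
  classical
  rintro ⟨S, hcard, hs, hd, huni⟩
  have horb := aux_orbit S hs hd
  set Sa := S.filter (fun p => (p 0 = 0 ∧ p 1 ≠ 0) ∨ (p 1 = 0 ∧ p 0 ≠ 0)) with hSa
  set Sd := S.filter (fun p => p 0 ≠ 0 ∧ (p 0)^2 = (p 1)^2) with hSd
  set Sf := S.filter (fun p => p 0 ≠ 0 ∧ p 1 ≠ 0 ∧ (p 0)^2 ≠ (p 1)^2) with hSf
  -- axis fiber bound
  have hA4 : 4 * (Sa.image φ2).card ≤ Sa.card := by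
    refine aux_fiber Sa φ2 4 (aux_axis Sa φ2 ?_ ?_ ?_)
    · intro p hp
      rw [hSa, Finset.mem_filter] at hp
      obtain ⟨hpS, hpa⟩ := hp
      obtain ⟨o1, o2, _, _, o5⟩ := horb p hpS
      refine ⟨Finset.mem_filter.mpr ⟨o1, ?_⟩, Finset.mem_filter.mpr ⟨o2, ?_⟩,
        Finset.mem_filter.mpr ⟨o5, ?_⟩⟩ <;>
        simp only [Matrix.cons_val_zero, Matrix.cons_val_one, Matrix.head_cons, neg_eq_zero,
          neg_ne_zero] <;> tauto
    · intro p hp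
      exact (Finset.mem_filter.mp hp).2
    · rintro p q (⟨h1, h2⟩ | ⟨h1, h2⟩) <;> simp only [φ2, Prod.mk.injEq, h1, h2] <;>
        exact ⟨by ring, by ring⟩
  -- diagonal fiber bound
  have hD4 : 4 * (Sd.image φ2).card ≤ Sd.card := by
    refine aux_fiber Sd φ2 4 (aux_signs Sd φ2 ?_ ?_ ?_)
    · intro p hp
      rw [hSd, Finset.mem_filter] at hp
      obtain ⟨hpS, hp1, hp2⟩ := hp
      obtain ⟨o1, _, o3, o4, _⟩ := horb p hpS
      refine ⟨Finset.mem_filter.mpr ⟨o3, ?_⟩, Finset.mem_filter.mpr ⟨o4, ?_⟩,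
        Finset.mem_filter.mpr ⟨o1, ?_⟩⟩ <;>
        simp only [Matrix.cons_val_zero, Matrix.cons_val_one, Matrix.head_cons, neg_ne_zero,
          neg_sq] <;> exact ⟨hp1, hp2⟩
    · intro p hp
      rw [hSd, Finset.mem_filter] at hp
      obtain ⟨hpS, hp1, hp2⟩ := hp
      refine ⟨hp1, fun h => hp1 ?_⟩
      have : (p 0)^2 = 0 := by rw [hp2, h]; ring
      exact pow_eq_zero_iff two_ne_zero |>.mp this
    · intro p q h1 h2
      simp only [φ2, Prod.mk.injEq, h1, h2]
  -- free fiber bounds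
  have hF4 : 4 * (Sf.image ψ2).card ≤ Sf.card := by
    refine aux_fiber Sf ψ2 4 (aux_signs Sf ψ2 ?_ ?_ ?_)
    · intro p hp
      rw [hSf, Finset.mem_filter] at hp
      obtain ⟨hpS, hp1, hp2, hp3⟩ := hp
      obtain ⟨o1, _, o3, o4, _⟩ := horb p hpS
      refine ⟨Finset.mem_filter.mpr ⟨o3, ?_⟩, Finset.mem_filter.mpr ⟨o4, ?_⟩,
        Finset.mem_filter.mpr ⟨o1, ?_⟩⟩ <;>
        simp only [Matrix.cons_val_zero, Matrix.cons_val_one, Matrix.head_cons, neg_ne_zero,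
          neg_sq] <;> exact ⟨hp1, hp2, hp3⟩
    · intro p hp
      rw [hSf, Finset.mem_filter] at hp
      exact ⟨hp.2.1, hp.2.2.1⟩
    · intro p q h1 h2
      simp only [ψ2, Prod.mk.injEq, h1, h2]
  have hC2 : 2 * ((Sf.image ψ2).image σ2).card ≤ (Sf.image ψ2).card := by
    refine aux_fiber (Sf.image ψ2) σ2 2 (aux_swap (Sf.image ψ2) ?_ ?_)
    · intro z hz
      obtain ⟨p, hp, rfl⟩ := Finset.mem_image.mp hz
      rw [hSf, Finset.mem_filter] at hp
      obtain ⟨hpS, hp1, hp2, hp3⟩ := hp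
      have hmem : (![p 1, p 0] : Fin 2 → ℝ) ∈ Sf := by
        rw [hSf, Finset.mem_filter]
        refine ⟨hs p hpS, ?_⟩
        simp only [Matrix.cons_val_zero, Matrix.cons_val_one, Matrix.head_cons]
        exact ⟨hp2, hp1, fun h => hp3 h.symm⟩
      have : ψ2 ![p 1, p 0] = ((ψ2 p).2, (ψ2 p).1) := by
        simp [ψ2]
      exact this ▸ Finset.mem_image_of_mem ψ2 hmem
    · intro z hz
      obtain ⟨p, hp, rfl⟩ := Finset.mem_image.mp hz
      rw [hSf, Finset.mem_filter] at hp
      exact hp.2.2.2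
  have himg : Sf.image φ2 = (Sf.image ψ2).image σ2 := by
    rw [Finset.image_image]
    rfl
  -- disjointness and sum
  have hsum : Sa.card + Sd.card + Sf.card ≤ 28 := by
    have hd1 : Disjoint Sa Sd := by
      rw [Finset.disjoint_left]
      intro p hpa hpd
      rw [hSa, Finset.mem_filter] at hpa
      rw [hSd, Finset.mem_filter] at hpd
      rcases hpa.2 with ⟨h1, _⟩ | ⟨h1, _⟩
      · exact hpd.2.1 h1
      · exact hpd.2.1 (pow_eq_zero_iff two_ne_zero |>.mp (by rw [hpd.2.2, h1]; ring))
    have hd2 : Disjoint Sa Sf := by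
      rw [Finset.disjoint_left]
      intro p hpa hpf
      rw [hSa, Finset.mem_filter] at hpa
      rw [hSf, Finset.mem_filter] at hpf
      rcases hpa.2 with ⟨h1, _⟩ | ⟨h1, _⟩
      · exact hpf.2.1 h1
      · exact hpf.2.2.1 h1
    have hd3 : Disjoint Sd Sf := by
      rw [Finset.disjoint_left]
      intro p hpd hpf
      rw [hSd, Finset.mem_filter] at hpd
      rw [hSf, Finset.mem_filter] at hpf
      exact hpf.2.2.2 hpd.2.2
    calc Sa.card + Sd.card + Sf.card = ((Sa ∪ Sd) ∪ Sf).card := by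
          rw [Finset.card_union_of_disjoint (Finset.disjoint_union_left.mpr ⟨hd2, hd3⟩),
            Finset.card_union_of_disjoint hd1]
    _ ≤ S.card := Finset.card_le_card (Finset.union_subset
          (Finset.union_subset (Finset.filter_subset _ _) (Finset.filter_subset _ _))
          (Finset.filter_subset _ _))
    _ = 28 := hcard
  set P := (Sa.image φ2).card with hP
  set Q := (Sd.image φ2).card with hQ
  set Cc := (Sf.image φ2).card with hCc
  have hCc2 : 2 * Cc ≤ (Sf.image ψ2).card := by rw [hCc, himg]; exact hC2
  have htri : Cc ≤ 1 ∨ P + Cc ≤ 3 ∨ Q + Cc ≤ 3 := by omega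
  -- degree helpers
  have degX0 : (X 0 : MvPolynomial (Fin 2) ℝ).totalDegree ≤ 1 := le_of_eq (totalDegree_X 0)
  have degX1 : (X 1 : MvPolynomial (Fin 2) ℝ).totalDegree ≤ 1 := le_of_eq (totalDegree_X 1)
  have degu : (X 0 ^ 2 + X 1 ^ 2 : MvPolynomial (Fin 2) ℝ).totalDegree ≤ 2 :=
    le_trans (totalDegree_add _ _) (by simp [totalDegree_X_pow])
  have degs : (X 0 ^ 2 - X 1 ^ 2 : MvPolynomial (Fin 2) ℝ).totalDegree ≤ 2 :=
    le_trans (totalDegree_sub _ _) (by simp [totalDegree_X_pow])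
  have degv : (X 0 ^ 2 * X 1 ^ 2 : MvPolynomial (Fin 2) ℝ).totalDegree ≤ 4 :=
    le_trans (totalDegree_mul _ _) (by simp [totalDegree_X_pow])
  rcases htri with h | h | h
  · -- few free radii : use xy(x²-y²)(c₀ + c₁(x²+y²))
    obtain ⟨c, hc0, hcF⟩ := aux_kernel (n := 2) (Sf.image φ2) (fun z => ![1, z.1]) (by omega)
    set g : MvPolynomial (Fin 2) ℝ := C (c 0) + C (c 1) * (X 0 ^ 2 + X 1 ^ 2) with hg
    set q : MvPolynomial (Fin 2) ℝ := X 0 * X 1 * (X 0 ^ 2 - X 1 ^ 2) * g with hq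
    have hdeg : q.totalDegree ≤ 6 := by
      rw [hq]
      refine le_trans (totalDegree_mul _ _) ?_
      have h1 : (X 0 * X 1 * (X 0 ^ 2 - X 1 ^ 2) : MvPolynomial (Fin 2) ℝ).totalDegree ≤ 4 := by
        refine le_trans (totalDegree_mul _ _) ?_
        have := le_trans (totalDegree_mul (X 0 : MvPolynomial (Fin 2) ℝ) (X 1))
          (add_le_add degX0 degX1)
        omega
      have h2 : g.totalDegree ≤ 2 := by
        rw [hg]
        refine le_trans (totalDegree_add _ _) (max_le (by simp) ?_)
        refine le_trans (totalDegree_mul _ _) ?_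
        simpa using degu
      omega
    have hvan : ∀ p ∈ S, MvPolynomial.eval p q = 0 := by
      intro p hp
      rw [hq, hg]
      simp only [map_mul, map_add, map_sub, map_pow, eval_X, eval_C]
      by_cases h0 : p 0 = 0
      · rw [h0]; ring
      by_cases h1 : p 1 = 0
      · rw [h1]; ring
      by_cases h2 : (p 0) ^ 2 = (p 1) ^ 2
      · rw [h2]; ring
      · have hmem : φ2 p ∈ Sf.image φ2 :=
          Finset.mem_image_of_mem _ (by rw [hSf, Finset.mem_filter]; exact ⟨hp, h0, h1, h2⟩)
        have hz := hcF _ hmem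
        simp only [Fin.sum_univ_two, Matrix.cons_val_zero, Matrix.cons_val_one, Matrix.head_cons,
          φ2, mul_one] at hz
        linear_combination (p 0 * p 1 * ((p 0) ^ 2 - (p 1) ^ 2)) * hz
    have hq0 := huni q hdeg hvan
    have e1 := congrArg (MvPolynomial.eval ![(1:ℝ), 2]) hq0
    have e2 := congrArg (MvPolynomial.eval ![(1:ℝ), 3]) hq0
    rw [hq, hg] at e1 e2
    simp only [map_mul, map_add, map_sub, map_pow, eval_X, eval_C, map_zero,
      Matrix.cons_val_zero, Matrix.cons_val_one, Matrix.head_cons] at e1 e2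
    have hc00 : c 0 = 0 := by nlinarith [e1, e2]
    have hc01 : c 1 = 0 := by nlinarith [e1, e2]
    exact hc0 (funext fun i => by fin_cases i <;> simpa [hc00, hc01])
  · -- few axis+free values : use (x²-y²)·(quartic invariant)
    obtain ⟨c, hc0, hcF⟩ := aux_kernel (n := 4) (Sa.image φ2 ∪ Sf.image φ2)
      (fun z => ![1, z.1, z.1 ^ 2, z.2])
      (lt_of_le_of_lt (Finset.card_union_le _ _) (by omega))
    set g : MvPolynomial (Fin 2) ℝ := C (c 0) + C (c 1) * (X 0 ^ 2 + X 1 ^ 2) +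
      C (c 2) * (X 0 ^ 2 + X 1 ^ 2) ^ 2 + C (c 3) * (X 0 ^ 2 * X 1 ^ 2) with hg
    have hgdeg : g.totalDegree ≤ 4 := by
      rw [hg]
      refine le_trans (totalDegree_add _ _) (max_le (le_trans (totalDegree_add _ _)
        (max_le (le_trans (totalDegree_add _ _) (max_le (by simp) ?_)) ?_)) ?_)
      · exact le_trans (totalDegree_mul _ _) (by simpa using le_trans degu (by norm_num))
      · refine le_trans (totalDegree_mul _ _) ?_
        have : ((X 0 ^ 2 + X 1 ^ 2 : MvPolynomial (Fin 2) ℝ) ^ 2).totalDegree ≤ 4 := by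
          rw [pow_two]
          exact le_trans (totalDegree_mul _ _) (by omega)
        simpa using this
      · exact le_trans (totalDegree_mul _ _) (by simpa using degv)
    have hgcond : ∀ p : Fin 2 → ℝ, φ2 p ∈ Sa.image φ2 ∪ Sf.image φ2 →
        MvPolynomial.eval p g = 0 := by
      intro p hmem
      have hz := hcF _ hmem
      simp only [Fin.sum_univ_four, Matrix.cons_val_zero, Matrix.cons_val_one, Matrix.head_cons,
        Matrix.cons_val_two, Matrix.cons_val_three, Matrix.tail_cons, φ2, mul_one] at hz
      rw [hg]
      simp only [map_mul, map_add, map_pow, eval_X, eval_C]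
      linear_combination hz
    set q : MvPolynomial (Fin 2) ℝ := (X 0 ^ 2 - X 1 ^ 2) * g with hq
    have hdeg : q.totalDegree ≤ 6 := by
      rw [hq]
      refine le_trans (totalDegree_mul _ _) ?_
      omega
    have hvan : ∀ p ∈ S, MvPolynomial.eval p q = 0 := by
      intro p hp
      rw [hq]
      rw [map_mul]
      by_cases h2 : (p 0) ^ 2 = (p 1) ^ 2
      · have : MvPolynomial.eval p (X 0 ^ 2 - X 1 ^ 2 : MvPolynomial (Fin 2) ℝ) = 0 := by
          simp only [map_sub, map_pow, eval_X]
          rw [h2]; ring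
        rw [this, zero_mul]
      · have hmem : φ2 p ∈ Sa.image φ2 ∪ Sf.image φ2 := by
          by_cases h0 : p 0 = 0
          · refine Finset.mem_union_left _ (Finset.mem_image_of_mem _ ?_)
            rw [hSa, Finset.mem_filter]
            exact ⟨hp, Or.inl ⟨h0, fun h1 => h2 (by rw [h0, h1])⟩⟩
          by_cases h1 : p 1 = 0
          · refine Finset.mem_union_left _ (Finset.mem_image_of_mem _ ?_)
            rw [hSa, Finset.mem_filter]
            exact ⟨hp, Or.inr ⟨h1, h0⟩⟩
          · refine Finset.mem_union_right _ (Finset.mem_image_of_mem _ ?_)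
            rw [hSf, Finset.mem_filter]
            exact ⟨hp, h0, h1, h2⟩
        rw [hgcond p hmem, mul_zero]
    have hq0 := huni q hdeg hvan
    have e1 := congrArg (MvPolynomial.eval ![(1:ℝ), 0]) hq0
    have e2 := congrArg (MvPolynomial.eval ![(2:ℝ), 0]) hq0
    have e3 := congrArg (MvPolynomial.eval ![(3:ℝ), 0]) hq0
    have e4 := congrArg (MvPolynomial.eval ![(2:ℝ), 1]) hq0
    rw [hq, hg] at e1 e2 e3 e4
    simp only [map_mul, map_add, map_sub, map_pow, eval_X, eval_C, map_zero,
      Matrix.cons_val_zero, Matrix.cons_val_one, Matrix.head_cons] at e1 e2 e3 e4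
    have hc00 : c 0 = 0 := by nlinarith [e1, e2, e3, e4]
    have hc01 : c 1 = 0 := by nlinarith [e1, e2, e3, e4]
    have hc02 : c 2 = 0 := by nlinarith [e1, e2, e3, e4]
    have hc03 : c 3 = 0 := by nlinarith [e1, e2, e3, e4]
    exact hc0 (funext fun i => by fin_cases i <;> simpa [hc00, hc01, hc02, hc03])
  · -- few diagonal+free values : use xy·(quartic invariant)
    obtain ⟨c, hc0, hcF⟩ := aux_kernel (n := 4) (Sd.image φ2 ∪ Sf.image φ2)
      (fun z => ![1, z.1, z.1 ^ 2, z.2])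
      (lt_of_le_of_lt (Finset.card_union_le _ _) (by omega))
    set g : MvPolynomial (Fin 2) ℝ := C (c 0) + C (c 1) * (X 0 ^ 2 + X 1 ^ 2) +
      C (c 2) * (X 0 ^ 2 + X 1 ^ 2) ^ 2 + C (c 3) * (X 0 ^ 2 * X 1 ^ 2) with hg
    have hgdeg : g.totalDegree ≤ 4 := by
      rw [hg]
      refine le_trans (totalDegree_add _ _) (max_le (le_trans (totalDegree_add _ _)
        (max_le (le_trans (totalDegree_add _ _) (max_le (by simp) ?_)) ?_)) ?_)
      · exact le_trans (totalDegree_mul _ _) (by simpa using le_trans degu (by norm_num))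
      · refine le_trans (totalDegree_mul _ _) ?_
        have : ((X 0 ^ 2 + X 1 ^ 2 : MvPolynomial (Fin 2) ℝ) ^ 2).totalDegree ≤ 4 := by
          rw [pow_two]
          exact le_trans (totalDegree_mul _ _) (by omega)
        simpa using this
      · exact le_trans (totalDegree_mul _ _) (by simpa using degv)
    have hgcond : ∀ p : Fin 2 → ℝ, φ2 p ∈ Sd.image φ2 ∪ Sf.image φ2 →
        MvPolynomial.eval p g = 0 := by
      intro p hmem
      have hz := hcF _ hmem
      simp only [Fin.sum_univ_four, Matrix.cons_val_zero, Matrix.cons_val_one, Matrix.head_cons,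
        Matrix.cons_val_two, Matrix.cons_val_three, Matrix.tail_cons, φ2, mul_one] at hz
      rw [hg]
      simp only [map_mul, map_add, map_pow, eval_X, eval_C]
      linear_combination hz
    set q : MvPolynomial (Fin 2) ℝ := X 0 * X 1 * g with hq
    have hdeg : q.totalDegree ≤ 6 := by
      rw [hq]
      refine le_trans (totalDegree_mul _ _) ?_
      have := le_trans (totalDegree_mul (X 0 : MvPolynomial (Fin 2) ℝ) (X 1))
        (add_le_add degX0 degX1)
      omega
    have hvan : ∀ p ∈ S, MvPolynomial.eval p q = 0 := by
      intro p hp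
      rw [hq]
      rw [map_mul, map_mul, eval_X, eval_X]
      by_cases h0 : p 0 = 0
      · rw [h0]; ring
      by_cases h1 : p 1 = 0
      · rw [h1]; ring
      · have hmem : φ2 p ∈ Sd.image φ2 ∪ Sf.image φ2 := by
          by_cases h2 : (p 0) ^ 2 = (p 1) ^ 2
          · refine Finset.mem_union_left _ (Finset.mem_image_of_mem _ ?_)
            rw [hSd, Finset.mem_filter]
            exact ⟨hp, h0, h2⟩
          · refine Finset.mem_union_right _ (Finset.mem_image_of_mem _ ?_)
            rw [hSf, Finset.mem_filter]
            exact ⟨hp, h0, h1, h2⟩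
        rw [hgcond p hmem, mul_zero]
    have hq0 := huni q hdeg hvan
    have e1 := congrArg (MvPolynomial.eval ![(1:ℝ), 2]) hq0
    have e2 := congrArg (MvPolynomial.eval ![(1:ℝ), 3]) hq0
    have e3 := congrArg (MvPolynomial.eval ![(1:ℝ), 4]) hq0
    have e4 := congrArg (MvPolynomial.eval ![(2:ℝ), 3]) hq0
    rw [hq, hg] at e1 e2 e3 e4
    simp only [map_mul, map_add, map_pow, eval_X, eval_C, map_zero,
      Matrix.cons_val_zero, Matrix.cons_val_one, Matrix.head_cons] at e1 e2 e3 e4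
    have hc00 : c 0 = 0 := by nlinarith [e1, e2, e3, e4]
    have hc01 : c 1 = 0 := by nlinarith [e1, e2, e3, e4]
    have hc02 : c 2 = 0 := by nlinarith [e1, e2, e3, e4]
    have hc03 : c 3 = 0 := by nlinarith [e1, e2, e3, e4]
    exact hc0 (funext fun i => by fin_cases i <;> simpa [hc00, hc01, hc02, hc03])
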